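/- arXiv:0801.3986 — 2 statements merged into one kernel-verified Lean document; each statement's English description precedes it below -/
import Mathlib

section
/- Let n and d be positive integers with n ≥ d > 2. Then n·P(n−1, d−2) ≥ 2·P(n,d). -/
open Finset

/-- Hamming distance between two permutations of `{0,…,n-1}`. -/
def permDist {n : ℕ} (x y : Equiv.Perm (Fin n)) : ℕ :=
  (Finset.univ.filter fun i => x i ≠ y i).card

/-- Weight of a permutation: number of non-fixed points. -/
def permWt {n : ℕ} (x : Equiv.Perm (Fin n)) : ℕ :=
  (Finset.univ.filter fun i => x i ≠ i).card

/-- `C` is an `(n,d)` permutation array. -/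
def IsPA (n d : ℕ) (C : Finset (Equiv.Perm (Fin n))) : Prop :=
  ∀ x ∈ C, ∀ y ∈ C, x ≠ y → d ≤ permDist x y

/-- `P(n,d)`: the maximum size of an `(n,d)` permutation array. -/
noncomputable def Pmax (n d : ℕ) : ℕ :=
  sSup {m | ∃ C : Finset (Equiv.Perm (Fin n)), IsPA n d C ∧ C.card = m}

/-- `P[n,e]`: the maximum size of a subset of `S_n` with pairwise distances at most `e`. -/
noncomputable def PmaxLe (n e : ℕ) : ℕ :=
  sSup {m | ∃ Γ : Finset (Equiv.Perm (Fin n)),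
    (∀ x ∈ Γ, ∀ y ∈ Γ, x ≠ y → permDist x y ≤ e) ∧ Γ.card = m}

/-- `V(n,r) = Σ_{i=0}^{r} C(n,i)·D_i`. -/
def V (n r : ℕ) : ℕ := ∑ i ∈ Finset.range (r + 1), Nat.choose n i * numDerangements i

/-- `V₂(n,r) = Σ_{i=0}^{r} C(n,i)`. -/
def V2 (n r : ℕ) : ℕ := ∑ i ∈ Finset.range (r + 1), Nat.choose n i

/-- `L_{i,j}` (depending also on `n` and `d`). -/
def L (n d i j : ℕ) : ℕ :=
  ∑ k ∈ Finset.Icc ((i + j + 1 - d + 1) / 2) (min i j),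
    ∑ l ∈ Finset.range (min (d + 2 * k - i - j - 1) k + 1),
      Nat.choose i k * Nat.choose (n - i) (j - k) * Nat.choose k l *
        Nat.factorial (l + j - k)

/-- `T`: number of unordered pairs of distinct permutations in `S_n`, each of weight
between `1` and `d-1`, with Hamming distance at most `d-1`. -/
def Tperm (n d : ℕ) : ℕ :=
  ((Finset.univ : Finset (Equiv.Perm (Fin n) × Equiv.Perm (Fin n))).filter
    (fun p => p.1 ≠ p.2 ∧ 1 ≤ permWt p.1 ∧ permWt p.1 ≤ d - 1 ∧
      1 ≤ permWt p.2 ∧ permWt p.2 ≤ d - 1 ∧ permDist p.1 p.2 ≤ d - 1)).card / 2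

/-- Hamming weight of a binary vector. -/
def binWt {n : ℕ} (u : Fin n → Bool) : ℕ := (Finset.univ.filter fun i => u i ≠ false).card

/-- Hamming distance between binary vectors. -/
def binDist {n : ℕ} (u v : Fin n → Bool) : ℕ := (Finset.univ.filter fun i => u i ≠ v i).card

/-- `T′`: number of unordered pairs of distinct nonzero binary vectors of length `n`,
each of Hamming weight at most `d-1`, with Hamming distance at most `d-1`. -/
def Tbin (n d : ℕ) : ℕ :=
  ((Finset.univ : Finset ((Fin n → Bool) × (Fin n → Bool))).filter
    (fun p => p.1 ≠ p.2 ∧ p.1 ≠ (fun _ => false) ∧ p.2 ≠ (fun _ => false) ∧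
      binWt p.1 ≤ d - 1 ∧ binWt p.2 ≤ d - 1 ∧ binDist p.1 p.2 ≤ d - 1)).card / 2

lemma permDist_eq_zero_iff {n : ℕ} {x y : Equiv.Perm (Fin n)} :
    permDist x y = 0 ↔ x = y := by
  unfold permDist
  rw [Finset.card_eq_zero, Finset.filter_eq_empty_iff]
  constructor
  · intro h
    apply Equiv.ext
    intro i
    have := h (mem_univ i)
    simpa using this
  · intro h i _
    simp [h]

lemma permDist_mul_left {n : ℕ} (ρ x y : Equiv.Perm (Fin n)) :
    permDist (ρ * x) (ρ * y) = permDist x y := by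
  unfold permDist
  congr 1
  apply filter_congr
  intro i _
  simp [Equiv.Perm.mul_apply, ρ.injective.ne_iff]

lemma permDist_swap_le {n : ℕ} (a b : Fin n) (x y : Equiv.Perm (Fin n)) :
    permDist x y ≤ permDist x (Equiv.swap a b * y) + 2 := by
  unfold permDist
  have hsub : (univ.filter fun i => x i ≠ y i) ⊆
      (univ.filter fun i => x i ≠ (Equiv.swap a b * y) i) ∪ {y⁻¹ a, y⁻¹ b} := by
    intro i hi
    simp only [mem_filter, mem_univ, true_and] at hi
    by_cases h : x i ≠ (Equiv.swap a b * y) i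
    · exact mem_union_left _ (by simp only [mem_filter, mem_univ, true_and]; exact h)
    · push_neg at h
      have hab : y i = a ∨ y i = b := by
        by_contra hc
        push_neg at hc
        rw [Equiv.Perm.mul_apply, Equiv.swap_apply_of_ne_of_ne hc.1 hc.2] at h
        exact hi h
      apply mem_union_right
      rcases hab with h1 | h1
      · simp [← h1]
      · simp [← h1]
  calc (univ.filter fun i => x i ≠ y i).card
      ≤ _ := card_le_card hsub
    _ ≤ (univ.filter fun i => x i ≠ (Equiv.swap a b * y) i).card
        + ({y⁻¹ a, y⁻¹ b} : Finset (Fin n)).card := card_union_le _ _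
    _ ≤ _ := by
        gcongr
        exact (card_insert_le _ _).trans (by simp)

lemma decomposeFin_fst {m : ℕ} (σ : Equiv.Perm (Fin (m+1))) :
    (Equiv.Perm.decomposeFin σ).1 = σ 0 := by
  conv_rhs => rw [← Equiv.Perm.decomposeFin.symm_apply_apply σ]
  rw [show (Equiv.Perm.decomposeFin σ) = ((Equiv.Perm.decomposeFin σ).1, (Equiv.Perm.decomposeFin σ).2) from rfl,
    Equiv.Perm.decomposeFin_symm_apply_zero]

lemma apply_succ_eq {m : ℕ} (σ : Equiv.Perm (Fin (m+1))) (h : σ 0 = 0) (i : Fin m) :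
    σ i.succ = ((Equiv.Perm.decomposeFin σ).2 i).succ := by
  conv_lhs => rw [← Equiv.Perm.decomposeFin.symm_apply_apply σ]
  rw [show (Equiv.Perm.decomposeFin σ) = ((Equiv.Perm.decomposeFin σ).1, (Equiv.Perm.decomposeFin σ).2) from rfl,
    Equiv.Perm.decomposeFin_symm_apply_succ, decomposeFin_fst, h, Equiv.swap_self]
  rfl

lemma permDist_decompose {m : ℕ} (σ τ : Equiv.Perm (Fin (m+1)))
    (hσ : σ 0 = 0) (hτ : τ 0 = 0) :
    permDist (Equiv.Perm.decomposeFin σ).2 (Equiv.Perm.decomposeFin τ).2 = permDist σ τ := by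
  unfold permDist
  rw [show (univ.filter fun i => σ i ≠ τ i)
      = (univ.filter fun i => (Equiv.Perm.decomposeFin σ).2 i ≠ (Equiv.Perm.decomposeFin τ).2 i).image Fin.succ from ?_]
  · rw [card_image_of_injective _ (Fin.succ_injective m)]
  · ext i
    refine Fin.cases ?_ ?_ i
    · simp only [mem_filter, mem_univ, true_and, mem_image, hσ, hτ, ne_eq, not_true_eq_false,
        false_iff, not_exists, not_and]
      exact fun j _ => Fin.succ_ne_zero j
    · intro j
      simp only [mem_filter, mem_univ, true_and, mem_image]
      rw [apply_succ_eq σ hσ, apply_succ_eq τ hτ]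
      constructor
      · intro hne
        exact ⟨j, fun hc => hne (by rw [hc]), rfl⟩
      · rintro ⟨k, hk, hkj⟩
        have : k = j := Fin.succ_injective m hkj
        subst this
        exact fun hc => hk (Fin.succ_injective m hc)

lemma permDist_comm {n : ℕ} (x y : Equiv.Perm (Fin n)) : permDist x y = permDist y x := by
  unfold permDist
  congr 1
  apply filter_congr
  intro i _
  simp [ne_comm]

lemma bddAbove_PA (n d : ℕ) :
    BddAbove {m | ∃ C : Finset (Equiv.Perm (Fin n)), IsPA n d C ∧ C.card = m} := by
  refine ⟨Fintype.card (Equiv.Perm (Fin n)), ?_⟩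
  rintro m ⟨C, -, rfl⟩
  exact C.card_le_univ

lemma fiber_pair (m d : ℕ) (hd : 2 < d) (C : Finset (Equiv.Perm (Fin (m+1))))
    (hC : IsPA (m+1) d C) (a b : Fin (m+1)) (hab : a ≠ b) :
    (C.filter fun x => x 0 = a).card + (C.filter fun x => x 0 = b).card ≤ Pmax m (d-2) := by
  classical
  set ρa := Equiv.swap a 0 with hρa
  set D := C.filter (fun x => x 0 = a ∨ x 0 = b) with hD
  set g : Equiv.Perm (Fin (m+1)) → Equiv.Perm (Fin (m+1)) :=
    fun x => if x 0 = a then ρa * x else ρa * (Equiv.swap a b * x) with hg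
  have hg0 : ∀ x ∈ D, (g x) 0 = 0 := by
    intro x hx
    rcases (mem_filter.mp hx).2 with h | h
    · simp only [hg, if_pos h, Equiv.Perm.mul_apply, h, hρa, Equiv.swap_apply_left]
    · have hxa : x 0 ≠ a := by rw [h]; exact fun hc => hab hc.symm
      simp only [hg, if_neg hxa, Equiv.Perm.mul_apply, h, hρa, Equiv.swap_apply_right,
        Equiv.swap_apply_left]
  have hgd : ∀ x ∈ D, ∀ y ∈ D, x ≠ y → d - 2 ≤ permDist (g x) (g y) := by
    intro x hx y hy hxy
    have hdxy := hC x (mem_filter.mp hx).1 y (mem_filter.mp hy).1 hxy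
    by_cases h1 : x 0 = a <;> by_cases h2 : y 0 = a
    · simp only [hg, if_pos h1, if_pos h2]
      rw [permDist_mul_left]
      omega
    · simp only [hg, if_pos h1, if_neg h2]
      rw [permDist_mul_left]
      have := permDist_swap_le a b x y
      omega
    · simp only [hg, if_neg h1, if_pos h2]
      rw [permDist_mul_left, permDist_comm]
      have := permDist_swap_le a b y x
      rw [permDist_comm x y] at hdxy
      omega
    · simp only [hg, if_neg h1, if_neg h2]
      rw [permDist_mul_left, permDist_mul_left]
      omega
  set f : Equiv.Perm (Fin (m+1)) → Equiv.Perm (Fin m) :=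
    fun x => (Equiv.Perm.decomposeFin (g x)).2 with hf
  have hfd : ∀ x ∈ D, ∀ y ∈ D, x ≠ y → d - 2 ≤ permDist (f x) (f y) := by
    intro x hx y hy hxy
    rw [hf]
    simp only
    rw [permDist_decompose _ _ (hg0 x hx) (hg0 y hy)]
    exact hgd x hx y hy hxy
  have hinj : Set.InjOn f D := by
    intro x hx y hy hxy
    by_contra hne
    have h1 := hfd x hx y hy hne
    rw [permDist_eq_zero_iff.mpr hxy] at h1
    omega
  have hcard : (D.image f).card = D.card := card_image_of_injOn hinj
  have hPA : IsPA m (d-2) (D.image f) := by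
    intro u hu v hv huv
    obtain ⟨x, hx, rfl⟩ := mem_image.mp hu
    obtain ⟨y, hy, rfl⟩ := mem_image.mp hv
    exact hfd x hx y hy (fun h => huv (by rw [h]))
  have hle : D.card ≤ Pmax m (d-2) :=
    le_csSup (bddAbove_PA m (d-2)) ⟨D.image f, hPA, hcard⟩
  have hsplit : (C.filter fun x => x 0 = a).card + (C.filter fun x => x 0 = b).card = D.card := by
    have hdisj : Disjoint (C.filter fun x => x 0 = a) (C.filter fun x => x 0 = b) := by
      rw [disjoint_left]
      intro x hx1 hx2
      exact hab (((mem_filter.mp hx1).2).symm.trans (mem_filter.mp hx2).2)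
    rw [hD, filter_or, card_union_of_disjoint hdisj]
  omega

theorem stmt18 (n d : ℕ) (hd : 2 < d) (hdn : d ≤ n) :
    n * Pmax (n - 1) (d - 2) ≥ 2 * Pmax n d := by
  obtain ⟨m, rfl⟩ : ∃ m, n = m + 1 := ⟨n - 1, by omega⟩
  rw [Nat.add_sub_cancel]
  have hm : 2 ≤ m := by omega
  have hne : {k | ∃ C : Finset (Equiv.Perm (Fin (m+1))), IsPA (m+1) d C ∧ C.card = k}.Nonempty :=
    ⟨0, ∅, fun x hx => absurd hx (notMem_empty x), card_empty⟩
  have hmem := Nat.sSup_mem hne (bddAbove_PA (m+1) d)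
  obtain ⟨C, hC, hcard⟩ := hmem
  have hPeq : Pmax (m+1) d = C.card := hcard.symm
  rw [hPeq]
  set M := Pmax m (d-2) with hM
  set c : Fin (m+1) → ℕ := fun a => (C.filter fun x => x 0 = a).card with hc
  have hsum : ∑ a : Fin (m+1), c a = C.card := by
    symm
    exact card_eq_sum_card_fiberwise (f := fun x : Equiv.Perm (Fin (m+1)) => x 0)
      (t := univ) (fun x _ => mem_univ _)
  have hkey : ∀ a : Fin (m+1), m * c a + C.card ≤ m * M + c a := by
    intro a
    have h1 : ∑ b ∈ univ.erase a, (c a + c b) ≤ ∑ b ∈ univ.erase a, M :=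
      sum_le_sum (fun b hb => fiber_pair m d hd C hC a b
        (fun h => (mem_erase.mp hb).1 h.symm))
    rw [sum_add_distrib, sum_const, sum_const] at h1
    have h2 : c a + ∑ b ∈ univ.erase a, c b = C.card := by
      rw [add_sum_erase _ c (mem_univ a)]
      exact hsum
    have hcarde : (univ.erase a).card = m := by
      rw [card_erase_of_mem (mem_univ a), card_univ, Fintype.card_fin]
      rfl
    rw [hcarde, smul_eq_mul, smul_eq_mul] at h1
    linarith
  have hsum2 : ∑ a : Fin (m+1), (m * c a + C.card) ≤ ∑ a : Fin (m+1), (m * M + c a) :=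
    sum_le_sum fun a _ => hkey a
  rw [sum_add_distrib, sum_add_distrib, ← mul_sum, hsum, sum_const, sum_const, card_univ,
    Fintype.card_fin, smul_eq_mul, smul_eq_mul] at hsum2
  have h3 : m * (2 * C.card) ≤ m * ((m+1) * M) := by nlinarith
  have h4 := Nat.le_of_mul_le_mul_left h3 (by omega : 0 < m)
  omega
end

section
/- Let q be a prime power with q ≥ 7. Then P(q, q−4) ≥ (q+1)·q·(q−1), P(q, q−3) ≥ 2·q·(q−1), P(q−1, q−4) ≥ (q+1)·(q−1), and P(q−1, q−6) ≥ 2·(q+1)·(q−1). -/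
set_option linter.unusedSectionVars false
set_option linter.unnecessarySimpa false


open Finset

section Mob
variable {F : Type} [Field F] [Fintype F] [DecidableEq F]

def mob (a b c d : F) : Option F → Option F
  | none => if c = 0 then none else some (a / c)
  | some x => if c * x + d = 0 then none else some ((a * x + b) / (c * x + d))

lemma mob_none (a b c d : F) : mob a b c d none = if c = 0 then none else some (a/c) := rfl

lemma mob_some (a b c d x : F) :
    mob a b c d (some x) = if c * x + d = 0 then none else some ((a*x+b)/(c*x+d)) := rfl

lemma mob_comp (a b c d a' b' c' d' : F) (hB : a'*d' - b'*c' ≠ 0) (x : Option F) :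
    mob a b c d (mob a' b' c' d' x) =
      mob (a*a'+b*c') (a*b'+b*d') (c*a'+d*c') (c*b'+d*d') x := by
  cases x with
  | none =>
    by_cases hc' : c' = 0
    · subst hc'
      have ha' : a' ≠ 0 := fun h => hB (by rw [h]; ring)
      rw [mob_none, if_pos rfl, mob_none, mob_none]
      by_cases hc : c = 0
      · simp [hc]
      · have : c * a' + d * 0 ≠ 0 := by simpa using mul_ne_zero hc ha'
        rw [if_neg hc, if_neg this]
        congr 1
        field_simp
        try ring
    · rw [mob_none, if_neg hc', mob_some, mob_none]
      have hden : c * (a'/c') + d = (c * a' + d * c')/c' := by field_simp; try ring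
      by_cases h2 : c * a' + d * c' = 0
      · rw [if_pos, if_pos h2]
        rw [hden, h2, zero_div]
      · rw [if_neg, if_neg h2]
        · congr 1
          rw [hden]
          rw [div_eq_div_iff]
          · field_simp
            try ring
          · rw [div_ne_zero_iff]; exact ⟨h2, hc'⟩
          · exact h2
        · rw [hden]; exact div_ne_zero h2 hc'
  | some x =>
    by_cases hin : c' * x + d' = 0
    · rw [mob_some, if_pos hin, mob_none, mob_some]
      have hnum : a' * x + b' ≠ 0 := by
        intro h
        apply hB
        have : d' = -(c' * x) := by linear_combination hin
        have hb : b' = -(a' * x) := by linear_combination h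
        rw [this, hb]; ring
      have hden : (c*a'+d*c') * x + (c*b'+d*d') = c * (a' * x + b') := by
        linear_combination d * hin
      by_cases hc : c = 0
      · rw [if_pos hc, if_pos]; rw [hden, hc]; ring
      · rw [if_neg hc, if_neg]
        · congr 1
          have hnum2 : (a*a'+b*c') * x + (a*b'+b*d') = a * (a' * x + b') := by
            linear_combination b * hin
          rw [hnum2, hden, mul_div_mul_right _ _ hnum]
        · rw [hden]; exact mul_ne_zero hc hnum
    · rw [mob_some, if_neg hin, mob_some, mob_some]
      have hden : c * ((a'*x+b')/(c'*x+d')) + d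
          = ((c*a'+d*c') * x + (c*b'+d*d'))/(c'*x+d') := by
        rw [mul_div_assoc', div_add' _ _ _ hin]; congr 1; ring
      by_cases h2 : (c*a'+d*c') * x + (c*b'+d*d') = 0
      · rw [if_pos, if_pos h2]
        rw [hden, h2, zero_div]
      · rw [if_neg, if_neg h2]
        · congr 1
          rw [hden, div_eq_div_iff]
          · simp only [mul_div_assoc', div_add' _ _ _ hin, div_mul_eq_mul_div]
            ring
          · exact div_ne_zero h2 hin
          · exact h2
        · rw [hden]; exact div_ne_zero h2 hin

lemma mob_scalar (k : F) (hk : k ≠ 0) (x : Option F) : mob k 0 0 k x = x := by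
  cases x with
  | none => simp [mob_none]
  | some x => rw [mob_some]; rw [if_neg (by simpa using hk)]; congr 1; simp only [zero_mul, add_zero, zero_add]; exact mul_div_cancel_left₀ _ hk

def mobE (a b c d : F) (h : a*d - b*c ≠ 0) : Equiv.Perm (Option F) where
  toFun := mob a b c d
  invFun := mob d (-b) (-c) a
  left_inv := by
    intro x
    have := mob_comp d (-b) (-c) a a b c d (by intro hh; exact h (by linear_combination hh)) x
    rw [this]
    have e1 : d*a + -b*c = a*d - b*c := by ring
    have e2 : d*b + -b*d = 0 := by ring
    have e3 : -c*a + a*c = 0 := by ring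
    have e4 : -c*b + a*d = a*d - b*c := by ring
    rw [e1, e2, e3, e4]
    exact mob_scalar _ h x
  right_inv := by
    intro x
    have := mob_comp a b c d d (-b) (-c) a (by intro hh; exact h (by linear_combination hh)) x
    rw [this]
    have e1 : a*d + b*-c = a*d - b*c := by ring
    have e2 : a*-b + b*a = 0 := by ring
    have e3 : c*d + d*-c = 0 := by ring
    have e4 : c*-b + d*a = a*d - b*c := by ring
    rw [e1, e2, e3, e4]
    exact mob_scalar _ h x

lemma mob_fix_all (a b c d : F) (h : a*d - b*c ≠ 0) {x y z : Option F}
    (hxy : x ≠ y) (hxz : x ≠ z) (hyz : y ≠ z)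
    (hx : mob a b c d x = x) (hy : mob a b c d y = y) (hz : mob a b c d z = z) :
    ∀ w, mob a b c d w = w := by
  by_cases hc : c = 0
  · subst hc
    have hd : d ≠ 0 := fun hd => h (by rw [hd]; ring)
    have key : ∀ t : F, mob a b 0 d (some t) = some t → (a - d) * t + b = 0 := by
      intro t ht
      rw [mob_some, if_neg (by simpa using hd)] at ht
      have : (a * t + b)/(0 * t + d) = t := by injection ht
      rw [div_eq_iff (by simpa using hd)] at this
      linear_combination this
    obtain ⟨t₁, t₂, ht, e1, e2⟩ :
        ∃ t₁ t₂ : F, t₁ ≠ t₂ ∧ (a-d)*t₁ + b = 0 ∧ (a-d)*t₂ + b = 0 := by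
      cases x with
      | none =>
        cases y with
        | none => exact absurd rfl hxy
        | some ty =>
          cases z with
          | none => exact absurd rfl hxz
          | some tz =>
            exact ⟨ty, tz, fun hh => hyz (by rw [hh]), key ty hy, key tz hz⟩
      | some tx =>
        cases y with
        | none =>
          cases z with
          | none => exact absurd rfl hyz
          | some tz => exact ⟨tx, tz, fun hh => hxz (by rw [hh]), key tx hx, key tz hz⟩
        | some ty => exact ⟨tx, ty, fun hh => hxy (by rw [hh]), key tx hx, key ty hy⟩
    have had : a = d := by
      have h0 : (a - d) * (t₁ - t₂) = 0 := by linear_combination e1 - e2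
      rcases mul_eq_zero.1 h0 with h1 | h1
      · have := sub_eq_zero.1 h1; linear_combination this
      · exact absurd (sub_eq_zero.1 h1) ht
    have hb : b = 0 := by
      have h0 := e1; rw [had] at h0; linear_combination h0
    intro w
    cases w with
    | none => simp [mob_none]
    | some t =>
      rw [mob_some, if_neg (by simpa using hd), hb, had]
      congr 1
      simp only [zero_mul, add_zero, zero_add]; exact mul_div_cancel_left₀ _ hd
  · have key : ∀ t : F, mob a b c d (some t) = some t →
        c * t^2 + (d - a) * t - b = 0 := by
      intro t ht
      rw [mob_some] at ht
      by_cases h0 : c * t + d = 0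
      · rw [if_pos h0] at ht; exact absurd ht (by simp)
      · rw [if_neg h0] at ht
        have : (a * t + b)/(c * t + d) = t := by injection ht
        rw [div_eq_iff h0] at this
        linear_combination -this
    have hnone : mob a b c d none ≠ none := by
      rw [mob_none, if_neg hc]; simp
    obtain ⟨t₁, rfl⟩ : ∃ t, x = some t := by
      cases x with
      | none => exact absurd hx hnone
      | some t => exact ⟨t, rfl⟩
    obtain ⟨t₂, rfl⟩ : ∃ t, y = some t := by
      cases y with
      | none => exact absurd hy hnone
      | some t => exact ⟨t, rfl⟩
    obtain ⟨t₃, rfl⟩ : ∃ t, z = some t := by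
      cases z with
      | none => exact absurd hz hnone
      | some t => exact ⟨t, rfl⟩
    have d12 : t₁ ≠ t₂ := fun hh => hxy (by rw [hh])
    have d13 : t₁ ≠ t₃ := fun hh => hxz (by rw [hh])
    have d23 : t₂ ≠ t₃ := fun hh => hyz (by rw [hh])
    have e1 := key t₁ hx
    have e2 := key t₂ hy
    have e3 := key t₃ hz
    have q12 : c * (t₁ + t₂) + (d - a) = 0 := by
      have h0 : (c * (t₁ + t₂) + (d - a)) * (t₁ - t₂) = 0 := by linear_combination e1 - e2
      rcases mul_eq_zero.1 h0 with h1 | h1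
      · exact h1
      · exact absurd (sub_eq_zero.1 h1) d12
    have q13 : c * (t₁ + t₃) + (d - a) = 0 := by
      have h0 : (c * (t₁ + t₃) + (d - a)) * (t₁ - t₃) = 0 := by linear_combination e1 - e3
      rcases mul_eq_zero.1 h0 with h1 | h1
      · exact h1
      · exact absurd (sub_eq_zero.1 h1) d13
    have h0 : c * (t₂ - t₃) = 0 := by linear_combination q12 - q13
    rcases mul_eq_zero.1 h0 with h1 | h1
    · exact absurd h1 hc
    · exact absurd (sub_eq_zero.1 h1) d23

/-- the PGL(2,q) permutation set -/
def Mset (F : Type) [Field F] [Fintype F] [DecidableEq F] : Finset (Equiv.Perm (Option F)) :=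
  univ.filter fun g => ∃ a b c d : F, a*d - b*c ≠ 0 ∧ ∀ x, g x = mob a b c d x

lemma mobE_mem (a b c d : F) (h : a*d - b*c ≠ 0) : mobE a b c d h ∈ Mset F := by
  rw [Mset, mem_filter]
  exact ⟨mem_univ _, a, b, c, d, h, fun x => rfl⟩

lemma agree_of_three {g h : Equiv.Perm (Option F)} (hg : g ∈ Mset F) (hh : h ∈ Mset F)
    {x y z : Option F} (hxy : x ≠ y) (hxz : x ≠ z) (hyz : y ≠ z)
    (ex : g x = h x) (ey : g y = h y) (ez : g z = h z) : g = h := by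
  rw [Mset, mem_filter] at hg hh
  obtain ⟨-, a, b, c, d, hA, hgm⟩ := hg
  obtain ⟨-, a', b', c', d', hB, hhm⟩ := hh
  set aC := d'*a + -b'*c with haC
  set bC := d'*b + -b'*d with hbC
  set cC := -c'*a + a'*c with hcC
  set dC := -c'*b + a'*d with hdC
  have hC : aC*dC - bC*cC ≠ 0 := by
    intro hh2
    apply mul_ne_zero hB hA
    rw [haC, hbC, hcC, hdC] at hh2
    linear_combination hh2
  have comp1 : ∀ w, mob d' (-b') (-c') a' (mob a b c d w) = mob aC bC cC dC w :=
    fun w => mob_comp _ _ _ _ _ _ _ _ hA w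
  have compBBadj : ∀ w, mob a' b' c' d' (mob d' (-b') (-c') a' w) = w := by
    intro w
    have hBadj : d'*a' - (-b')*(-c') ≠ 0 := by
      intro hh2; exact hB (by linear_combination hh2)
    rw [mob_comp a' b' c' d' d' (-b') (-c') a' hBadj w]
    have e1 : a'*d' + b'*-c' = a'*d' - b'*c' := by ring
    have e2 : a'*-b' + b'*a' = 0 := by ring
    have e3 : c'*d' + d'*-c' = 0 := by ring
    have e4 : c'*-b' + d'*a' = a'*d' - b'*c' := by ring
    rw [e1, e2, e3, e4]
    exact mob_scalar _ hB w
  have fixedC : ∀ w, g w = h w → mob aC bC cC dC w = w := by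
    intro w hw
    rw [← comp1, ← hgm, hw, hhm]
    rw [mob_comp d' (-b') (-c') a' a' b' c' d' hB w]
    have e1 : d'*a' + -b'*c' = a'*d' - b'*c' := by ring
    have e2 : d'*b' + -b'*d' = 0 := by ring
    have e3 : -c'*a' + a'*c' = 0 := by ring
    have e4 : -c'*b' + a'*d' = a'*d' - b'*c' := by ring
    rw [e1, e2, e3, e4]
    exact mob_scalar _ hB w
  have allfix := mob_fix_all aC bC cC dC hC hxy hxz hyz
    (fixedC x ex) (fixedC y ey) (fixedC z ez)
  apply Equiv.ext
  intro w
  rw [hgm, hhm]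
  have hw2 : mob d' (-b') (-c') a' (mob a b c d w) = w := by rw [comp1]; exact allfix w
  calc mob a b c d w = mob a' b' c' d' (mob d' (-b') (-c') a' (mob a b c d w)) :=
        (compBBadj _).symm
    _ = mob a' b' c' d' w := by rw [hw2]

lemma agree_card_le_two {g h : Equiv.Perm (Option F)} (hg : g ∈ Mset F) (hh : h ∈ Mset F)
    (hne : g ≠ h) : (univ.filter fun y : Option F => g y = h y).card ≤ 2 := by
  by_contra hcon
  push_neg at hcon
  obtain ⟨x, y, z, hx, hy, hz, hxy, hxz, hyz⟩ := Finset.two_lt_card_iff.1 hcon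
  rw [mem_filter] at hx hy hz
  exact hne (agree_of_three hg hh hxy hxz hyz hx.2 hy.2 hz.2)

lemma trans3 (u v w : Option F) (huv : u ≠ v) (huw : u ≠ w) (hvw : v ≠ w) :
    ∃ g ∈ Mset F, g (some 0) = u ∧ g (some 1) = v ∧ g none = w := by
  cases u with
  | none =>
    cases v with
    | none => exact absurd rfl huv
    | some v0 =>
      cases w with
      | none => exact absurd rfl huw
      | some w0 =>
        have hvw0 : v0 ≠ w0 := fun hh => hvw (by rw [hh])
        have hdet : w0 * 0 - (v0 - w0) * 1 ≠ 0 := by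
          intro hh; exact hvw0 (by linear_combination -hh)
        refine ⟨mobE w0 (v0 - w0) 1 0 hdet, mobE_mem _ _ _ _ _, ?_, ?_, ?_⟩
        · show mob w0 (v0-w0) 1 0 (some 0) = none
          rw [mob_some, if_pos (by ring)]
        · show mob w0 (v0-w0) 1 0 (some 1) = some v0
          rw [mob_some, if_neg (by intro hh; simpa using hh)]
          congr 1
          field_simp
          ring
        · show mob w0 (v0-w0) 1 0 none = some w0
          rw [mob_none, if_neg one_ne_zero]
          congr 1
          field_simp
  | some u0 =>
    cases v with
    | none =>
      cases w with
      | none => exact absurd rfl hvw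
      | some w0 =>
        have huw0 : u0 ≠ w0 := fun hh => huw (by rw [hh])
        have hdet : w0 * (-1) - (-u0) * 1 ≠ 0 := by
          intro hh; exact huw0 (by linear_combination hh)
        refine ⟨mobE w0 (-u0) 1 (-1) hdet, mobE_mem _ _ _ _ _, ?_, ?_, ?_⟩
        · show mob w0 (-u0) 1 (-1) (some 0) = some u0
          rw [mob_some, if_neg (by intro hh; rw [mul_zero, zero_add] at hh; simpa using hh)]
          congr 1
          rw [mul_zero, zero_add, mul_zero, zero_add]
          field_simp
        · show mob w0 (-u0) 1 (-1) (some 1) = none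
          rw [mob_some, if_pos (by ring)]
        · show mob w0 (-u0) 1 (-1) none = some w0
          rw [mob_none, if_neg one_ne_zero]
          congr 1
          field_simp
    | some v0 =>
      cases w with
      | none =>
        have huv0 : u0 ≠ v0 := fun hh => huv (by rw [hh])
        have hdet : (v0 - u0) * 1 - u0 * 0 ≠ 0 := by
          intro hh; exact huv0 (by linear_combination -hh)
        refine ⟨mobE (v0 - u0) u0 0 1 hdet, mobE_mem _ _ _ _ _, ?_, ?_, ?_⟩
        · show mob (v0-u0) u0 0 1 (some 0) = some u0
          rw [mob_some, if_neg (by intro hh; simpa using hh)]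
          congr 1
          rw [mul_zero, zero_add, mul_zero, zero_add]
          field_simp
        · show mob (v0-u0) u0 0 1 (some 1) = some v0
          rw [mob_some, if_neg (by intro hh; simpa using hh)]
          congr 1
          norm_num
        · show mob (v0-u0) u0 0 1 none = none
          rw [mob_none, if_pos rfl]
      | some w0 =>
        have huv0 : u0 ≠ v0 := fun hh => huv (by rw [hh])
        have huw0 : u0 ≠ w0 := fun hh => huw (by rw [hh])
        have hvw0 : v0 ≠ w0 := fun hh => hvw (by rw [hh])
        have h1 : v0 - u0 ≠ 0 := sub_ne_zero.2 (Ne.symm huv0)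
        have h2 : w0 - v0 ≠ 0 := sub_ne_zero.2 (Ne.symm hvw0)
        have h3 : w0 - u0 ≠ 0 := sub_ne_zero.2 (Ne.symm huw0)
        have hdet : (w0*(v0-u0)) * (w0-v0) - (u0*(w0-v0)) * (v0-u0) ≠ 0 := by
          have : (w0*(v0-u0)) * (w0-v0) - (u0*(w0-v0)) * (v0-u0)
              = (v0-u0)*(w0-v0)*(w0-u0) := by ring
          rw [this]
          exact mul_ne_zero (mul_ne_zero h1 h2) h3
        refine ⟨mobE (w0*(v0-u0)) (u0*(w0-v0)) (v0-u0) (w0-v0) hdet,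
          mobE_mem _ _ _ _ _, ?_, ?_, ?_⟩
        · show mob (w0*(v0-u0)) (u0*(w0-v0)) (v0-u0) (w0-v0) (some 0) = some u0
          rw [mob_some, if_neg (by intro hh; rw [mul_zero, zero_add] at hh; exact h2 hh)]
          congr 1
          rw [mul_zero, zero_add, mul_zero, zero_add]
          field_simp
          try ring
        · show mob (w0*(v0-u0)) (u0*(w0-v0)) (v0-u0) (w0-v0) (some 1) = some v0
          have hden : (v0-u0) * 1 + (w0-v0) = w0 - u0 := by ring
          rw [mob_some, if_neg (by rw [hden]; exact h3)]
          congr 1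
          rw [hden, div_eq_iff h3]
          ring
        · show mob (w0*(v0-u0)) (u0*(w0-v0)) (v0-u0) (w0-v0) none = some w0
          rw [mob_none, if_neg h1]
          congr 1
          field_simp

lemma inj3 {g h : Equiv.Perm (Option F)} (hg : g ∈ Mset F) (hh : h ∈ Mset F)
    (e0 : g (some 0) = h (some 0)) (e1 : g (some 1) = h (some 1))
    (einf : g none = h none) : g = h := by
  refine agree_of_three hg hh (x := some 0) (y := some 1) (z := none) ?_ ?_ ?_ e0 e1 einf
  · simpa using zero_ne_one
  · simp
  · simp

lemma card_pairs (c : Option F) :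
    ((univ : Finset (Option F × Option F)).filter
      fun z => z.1 ≠ z.2 ∧ z.1 ≠ c ∧ z.2 ≠ c).card
      = Fintype.card F * (Fintype.card F - 1) := by
  classical
  have hrw : ((univ : Finset (Option F × Option F)).filter
      fun z => z.1 ≠ z.2 ∧ z.1 ≠ c ∧ z.2 ≠ c)
      = (univ.erase c).biUnion
          (fun u => ((univ.erase c).erase u).image fun v => (u, v)) := by
    ext ⟨u, v⟩
    simp only [mem_filter, mem_univ, true_and, mem_biUnion, mem_erase, mem_image]
    constructor
    · rintro ⟨h1, h2, h3⟩
      exact ⟨u, ⟨h2, trivial⟩, v, ⟨Ne.symm h1, h3, trivial⟩, rfl⟩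
    · rintro ⟨u', ⟨hu1, -⟩, v', ⟨hv1, hv2, -⟩, heq⟩
      obtain ⟨rfl, rfl⟩ := Prod.mk.inj heq
      exact ⟨Ne.symm hv1, hu1, hv2⟩
  rw [hrw, card_biUnion]
  · have hcards : ∀ u ∈ univ.erase c,
        (((univ.erase c).erase u).image fun v => (u, v)).card = Fintype.card F - 1 := by
      intro u hu
      rw [card_image_of_injective _ (fun v v' hvv => (Prod.mk.inj hvv).2),
        card_erase_of_mem (mem_erase.2 ⟨(mem_erase.1 hu).1, mem_univ u⟩),
        card_erase_of_mem (mem_univ c), card_univ, Fintype.card_option]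
      simp
    rw [Finset.sum_congr rfl hcards, sum_const, smul_eq_mul,
      card_erase_of_mem (mem_univ c), card_univ, Fintype.card_option]
    simp
  · intro u hu u' hu' huu
    apply Finset.disjoint_left.2
    rintro ⟨a1, a2⟩ h1 h2
    rw [mem_image] at h1 h2
    obtain ⟨v, -, hv⟩ := h1
    obtain ⟨v', -, hv'⟩ := h2
    exact huu ((Prod.mk.inj hv).1.trans (Prod.mk.inj hv').1.symm)

lemma card_Mset_none (c : Option F) :
    ((Mset F).filter fun g => g none = c).card
      = Fintype.card F * (Fintype.card F - 1) := by
  classical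
  rw [← card_pairs c]
  apply Finset.card_bij (fun g _ => (g (some 0), g (some 1)))
  · intro g hg
    rw [mem_filter] at hg
    obtain ⟨hgM, hgc⟩ := hg
    rw [mem_filter]
    refine ⟨mem_univ _, ?_, ?_, ?_⟩
    · simp only [ne_eq, EmbeddingLike.apply_eq_iff_eq, Option.some.injEq]
      exact zero_ne_one
    · rw [← hgc]
      simp only [ne_eq, EmbeddingLike.apply_eq_iff_eq]
      simp
    · rw [← hgc]
      simp only [ne_eq, EmbeddingLike.apply_eq_iff_eq]
      simp
  · intro g hg h hh heq
    rw [mem_filter] at hg hh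
    obtain ⟨h1, h2⟩ := Prod.mk.inj heq
    exact inj3 hg.1 hh.1 h1 h2 (hg.2.trans hh.2.symm)
  · rintro ⟨u, v⟩ hz
    rw [mem_filter] at hz
    obtain ⟨-, h1, h2, h3⟩ := hz
    obtain ⟨g, hgM, e0, e1, einf⟩ := trans3 u v c h1 h2 h3
    exact ⟨g, mem_filter.2 ⟨hgM, einf⟩, by rw [e0, e1]⟩

lemma card_Mset : (Mset F).card
    = (Fintype.card F + 1) * (Fintype.card F * (Fintype.card F - 1)) := by
  classical
  have hrw : Mset F = univ.biUnion
      (fun c : Option F => (Mset F).filter fun g => g none = c) := by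
    ext g
    simp only [mem_biUnion, mem_univ, true_and, mem_filter]
    exact ⟨fun hg => ⟨g none, hg, rfl⟩, fun h => h.choose_spec.1⟩
  rw [hrw, card_biUnion]
  · rw [Finset.sum_congr rfl (fun c _ => card_Mset_none c), sum_const, smul_eq_mul,
      card_univ, Fintype.card_option]
  · intro c hc c' hc' hcc
    apply Finset.disjoint_left.2
    intro g h1 h2
    rw [mem_filter] at h1 h2
    exact hcc (h1.2.symm.trans h2.2)

lemma card_Mset_Y (c : Option F) (hc : c ≠ none) :
    ((Mset F).filter fun g => g (some 0) = none ∧ g none = c).card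
      = Fintype.card F - 1 := by
  classical
  have hcard : ((univ.erase c).erase none).card = Fintype.card F - 1 := by
    rw [card_erase_of_mem (mem_erase.2 ⟨Ne.symm hc, mem_univ _⟩),
      card_erase_of_mem (mem_univ c), card_univ, Fintype.card_option]
    simp
  rw [← hcard]
  apply Finset.card_bij (fun g _ => g (some 1))
  · intro g hg
    rw [mem_filter] at hg
    obtain ⟨hgM, h0, hinf⟩ := hg
    rw [mem_erase, mem_erase]
    refine ⟨?_, ?_, mem_univ _⟩
    · rw [← h0]
      simp only [ne_eq, EmbeddingLike.apply_eq_iff_eq]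
      simp
    · rw [← hinf]
      simp only [ne_eq, EmbeddingLike.apply_eq_iff_eq]
      simp
  · intro g hg h hh heq
    rw [mem_filter] at hg hh
    exact inj3 hg.1 hh.1 (hg.2.1.trans hh.2.1.symm) heq (hg.2.2.trans hh.2.2.symm)
  · intro w hw
    rw [mem_erase, mem_erase] at hw
    obtain ⟨hw1, hw2, -⟩ := hw
    obtain ⟨g, hgM, e0, e1, einf⟩ := trans3 none w c (Ne.symm hw1) (Ne.symm hc) hw2
    exact ⟨g, mem_filter.2 ⟨hgM, e0, einf⟩, e1⟩

def hdist {β : Type*} [Fintype β] [DecidableEq β] (g h : Equiv.Perm β) : ℕ :=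
  (univ.filter fun x => g x ≠ h x).card

def ct1 (g : Equiv.Perm (Option F)) : Equiv.Perm (Option F) :=
  Equiv.swap (g none) none * g

def ct2 (g : Equiv.Perm (Option F)) : Equiv.Perm (Option F) :=
  Equiv.swap (ct1 g (some 0)) (some 0) * ct1 g

lemma ct1_none (g : Equiv.Perm (Option F)) : ct1 g none = none := by
  simp [ct1]

lemma ct2_none (g : Equiv.Perm (Option F)) : ct2 g none = none := by
  have h1 := ct1_none g
  simp only [ct2, Equiv.Perm.coe_mul, Function.comp_apply, h1]
  apply Equiv.swap_apply_of_ne_of_ne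
  · intro hh
    have : ct1 g none = ct1 g (some 0) := h1.trans hh
    simpa using (ct1 g).injective this
  · simp

lemma ct2_zero (g : Equiv.Perm (Option F)) : ct2 g (some 0) = some 0 := by
  simp [ct2]

lemma ct1_change {g : Equiv.Perm (Option F)} {y : Option F} (h : ct1 g y ≠ g y) :
    y = none ∨ g y = none := by
  by_contra hcon
  push_neg at hcon
  apply h
  simp only [ct1, Equiv.Perm.coe_mul, Function.comp_apply]
  exact Equiv.swap_apply_of_ne_of_ne (fun hh => hcon.1 (g.injective hh)) hcon.2

lemma ct2_change {g : Equiv.Perm (Option F)} {y : Option F} (h : ct2 g y ≠ g y) :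
    y = none ∨ g y = none ∨ y = some 0 ∨ ct1 g y = some 0 := by
  by_contra hcon
  push_neg at hcon
  obtain ⟨h1, h2, h3, h4⟩ := hcon
  have hc1 : ct1 g y = g y := by
    by_contra hc
    rcases ct1_change hc with h | h
    exacts [h1 h, h2 h]
  apply h
  simp only [ct2, Equiv.Perm.coe_mul, Function.comp_apply]
  rw [Equiv.swap_apply_of_ne_of_ne (fun hh => h3 ((ct1 g).injective hh)) h4]
  exact hc1

lemma hdist_subtypePerm {p : Option F → Prop} [DecidablePred p]
    (f g : Equiv.Perm (Option F)) (hf : ∀ x, p (f x) ↔ p x) (hg : ∀ x, p (g x) ↔ p x) :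
    hdist (f.subtypePerm hf) (g.subtypePerm hg)
      = (univ.filter fun y => p y ∧ f y ≠ g y).card := by
  classical
  apply Finset.card_bij (fun a _ => a.1)
  · intro a ha
    rw [mem_filter] at ha ⊢
    refine ⟨mem_univ _, a.2, ?_⟩
    intro hh
    exact ha.2 (Subtype.ext hh)
  · intro a _ b _ hab
    exact Subtype.ext hab
  · intro y hy
    rw [mem_filter] at hy
    obtain ⟨-, hp, hne⟩ := hy
    refine ⟨⟨y, hp⟩, ?_, rfl⟩
    rw [mem_filter]
    exact ⟨mem_univ _, fun hh => hne (Subtype.ext_iff.1 hh)⟩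

lemma hdist_split {p : Option F → Prop} [DecidablePred p]
    (f g : Equiv.Perm (Option F)) :
    (univ.filter fun y => p y ∧ f y ≠ g y).card
      + (univ.filter fun y => p y ∧ f y = g y).card
      = (univ.filter p).card := by
  classical
  rw [← filter_filter, ← filter_filter]
  have := Finset.card_filter_add_card_filter_not
    (s := univ.filter p) (p := fun y => f y ≠ g y)
  simp only [not_not] at this
  exact this

lemma agr_bound (p : Option F → Prop) [DecidablePred p]
    (g2 h2 g h : Equiv.Perm (Option F)) :
    (univ.filter fun y => p y ∧ g2 y = h2 y).card ≤
      ((univ.filter fun y => p y ∧ g y = h y).card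
        + (univ.filter fun y => p y ∧ g2 y ≠ g y).card)
        + (univ.filter fun y => p y ∧ h2 y ≠ h y).card := by
  classical
  refine le_trans (card_le_card ?_)
    (le_trans (card_union_le _ _) (Nat.add_le_add_right (card_union_le _ _) _))
  intro y
  simp only [mem_filter, mem_univ, true_and, mem_union]
  rintro ⟨hp, he⟩
  by_cases hgg : g2 y = g y
  · by_cases hhh : h2 y = h y
    · exact Or.inl (Or.inl ⟨hp, (hgg.symm.trans he).trans hhh⟩)
    · exact Or.inr ⟨hp, hhh⟩
  · exact Or.inl (Or.inr ⟨hp, hgg⟩)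

lemma base2 {g h : Equiv.Perm (Option F)} (hg : g ∈ Mset F) (hh : h ∈ Mset F)
    (hne : g ≠ h) (p : Option F → Prop) [DecidablePred p] :
    (univ.filter fun y => p y ∧ g y = h y).card ≤ 2 := by
  refine le_trans (card_le_card ?_) (agree_card_le_two hg hh hne)
  intro y hy
  rw [mem_filter] at hy ⊢
  exact ⟨hy.1, hy.2.2⟩

lemma base1 {g h : Equiv.Perm (Option F)} (hg : g ∈ Mset F) (hh : h ∈ Mset F)
    (hne : g ≠ h) (p : Option F → Prop) [DecidablePred p]
    (e : Option F) (hpe : ¬ p e) (hee : g e = h e) :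
    (univ.filter fun y => p y ∧ g y = h y).card ≤ 1 := by
  have hsub : (univ.filter fun y => p y ∧ g y = h y) ∪ {e}
      ⊆ univ.filter fun y => g y = h y := by
    intro y hy
    rw [mem_union, mem_singleton] at hy
    rw [mem_filter]
    rcases hy with hy | rfl
    · rw [mem_filter] at hy
      exact ⟨mem_univ _, hy.2.2⟩
    · exact ⟨mem_univ _, hee⟩
  have hdisj : Disjoint (univ.filter fun y => p y ∧ g y = h y) ({e} : Finset (Option F)) := by
    rw [Finset.disjoint_singleton_right, mem_filter]
    intro hy
    exact hpe hy.2.1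
  have := le_trans (le_of_eq (card_union_of_disjoint hdisj).symm)
    (le_trans (card_le_card hsub) (agree_card_le_two hg hh hne))
  simpa using this

lemma eqsymm {β : Type*} {f : Equiv.Perm β} {y v : β} (h : f y = v) : y = f.symm v := by
  rw [← h, Equiv.symm_apply_apply]

lemma delta1_le_one (g : Equiv.Perm (Option F)) :
    (univ.filter fun y => y ≠ none ∧ ct1 g y ≠ g y).card ≤ 1 := by
  refine le_trans (card_le_card (fun y hy => ?_)) (le_of_eq (card_singleton (g.symm none)))
  rw [mem_filter] at hy
  obtain ⟨-, h1, h2⟩ := hy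
  rw [mem_singleton]
  rcases ct1_change h2 with h | h
  · exact absurd h h1
  · exact eqsymm h

lemma delta1_zero {g : Equiv.Perm (Option F)} (hgn : g none = none) :
    (univ.filter fun y => y ≠ none ∧ ct1 g y ≠ g y).card = 0 := by
  rw [Finset.card_eq_zero, Finset.eq_empty_iff_forall_notMem]
  intro y hy
  rw [mem_filter] at hy
  apply hy.2.2
  simp only [ct1, hgn, Equiv.swap_self, Equiv.Perm.coe_mul, Function.comp_apply,
    Equiv.coe_refl, id_eq]

lemma delta2_le_two (g : Equiv.Perm (Option F)) :
    (univ.filter fun y => (y ≠ none ∧ y ≠ some 0) ∧ ct2 g y ≠ g y).card ≤ 2 := by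
  have hsub : (univ.filter fun y => (y ≠ none ∧ y ≠ some 0) ∧ ct2 g y ≠ g y)
      ⊆ ({g.symm none, (ct1 g).symm (some 0)} : Finset (Option F)) := by
    intro y hy
    rw [mem_filter] at hy
    obtain ⟨-, ⟨h1, h2⟩, h3⟩ := hy
    rw [mem_insert, mem_singleton]
    rcases ct2_change h3 with h | h | h | h
    · exact absurd h h1
    · exact Or.inl (eqsymm h)
    · exact absurd h h2
    · exact Or.inr (eqsymm h)
  refine le_trans (card_le_card hsub) ?_
  exact le_trans (card_insert_le _ _) (by simp)

lemma delta2_le_one (g : Equiv.Perm (Option F))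
    (hcase : g none = none ∨ g (some 0) = none) :
    (univ.filter fun y => (y ≠ none ∧ y ≠ some 0) ∧ ct2 g y ≠ g y).card ≤ 1 := by
  refine le_trans (card_le_card (fun y hy => ?_))
    (le_of_eq (card_singleton ((ct1 g).symm (some 0))))
  rw [mem_filter] at hy
  obtain ⟨-, ⟨h1, h2⟩, h3⟩ := hy
  rw [mem_singleton]
  rcases ct2_change h3 with h | h | h | h
  · exact absurd h h1
  · rcases hcase with hc | hc
    · exact absurd (g.injective (h.trans hc.symm)) h1
    · exact absurd (g.injective (h.trans hc.symm)) h2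
  · exact absurd h h2
  · exact eqsymm h

lemma ct1_zero_of_swap {g : Equiv.Perm (Option F)} (h0 : g (some 0) = none)
    (hn : g none = some 0) : ct1 g (some 0) = some 0 := by
  simp only [ct1, Equiv.Perm.coe_mul, Function.comp_apply, h0, hn]
  exact Equiv.swap_apply_right _ _

lemma delta2_zero {g : Equiv.Perm (Option F)} (h0 : g (some 0) = none)
    (hn : g none = some 0) :
    (univ.filter fun y => (y ≠ none ∧ y ≠ some 0) ∧ ct2 g y ≠ g y).card = 0 := by
  rw [Finset.card_eq_zero, Finset.eq_empty_iff_forall_notMem]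
  intro y hy
  rw [mem_filter] at hy
  obtain ⟨-, ⟨h1, h2⟩, h3⟩ := hy
  rcases ct2_change h3 with h | h | h | h
  · exact h1 h
  · exact h2 (g.injective (h.trans h0.symm))
  · exact h2 h
  · exact h2 ((ct1 g).injective (h.trans (ct1_zero_of_swap h0 hn).symm))

lemma fix_iff {f : Equiv.Perm (Option F)} (hf : f none = none) :
    ∀ x : Option F, x ≠ none ↔ f x ≠ none := by
  intro x
  constructor
  · intro h hh
    exact h (f.injective (hh.trans hf.symm))
  · intro h hh
    rw [hh] at h
    exact h hf

lemma fix_iff2 {f : Equiv.Perm (Option F)} (hfn : f none = none) (hf0 : f (some 0) = some 0) :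
    ∀ x : Option F, (x ≠ none ∧ x ≠ some 0) ↔ (f x ≠ none ∧ f x ≠ some 0) := by
  intro x
  constructor
  · rintro ⟨h1, h2⟩
    exact ⟨fun hh => h1 (f.injective (hh.trans hfn.symm)),
      fun hh => h2 (f.injective (hh.trans hf0.symm))⟩
  · rintro ⟨h1, h2⟩
    constructor
    · rintro rfl; exact h1 hfn
    · rintro rfl; exact h2 hf0

def Phi1 (g : Equiv.Perm (Option F)) : Equiv.Perm {y : Option F // y ≠ none} :=
  (ct1 g).subtypePerm (fun x => (fix_iff (ct1_none g) x).symm)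

def Phi2 (g : Equiv.Perm (Option F)) : Equiv.Perm {y : Option F // y ≠ none ∧ y ≠ some 0} :=
  (ct2 g).subtypePerm (fun x => (fix_iff2 (ct2_none g) (ct2_zero g) x).symm)

lemma card_p1 : ((univ : Finset (Option F)).filter fun y => y ≠ none).card
    = Fintype.card F := by
  rw [filter_ne', card_erase_of_mem (mem_univ _), card_univ, Fintype.card_option]
  simp

lemma card_p2 : ((univ : Finset (Option F)).filter fun y => y ≠ none ∧ y ≠ some 0).card
    = Fintype.card F - 1 := by
  have hrw : ((univ : Finset (Option F)).filter fun y => y ≠ none ∧ y ≠ some 0)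
      = (univ.erase none).erase (some 0) := by
    ext y
    simp only [mem_filter, mem_univ, true_and, mem_erase]
    tauto
  rw [hrw, card_erase_of_mem (mem_erase.2 ⟨by simp, mem_univ _⟩),
    card_erase_of_mem (mem_univ _), card_univ, Fintype.card_option]
  simp

lemma dist_goal1 {g h : Equiv.Perm (Option F)} (hg : g ∈ Mset F) (hh : h ∈ Mset F)
    (hne : g ≠ h) : Fintype.card F - 4 ≤ hdist (Phi1 g) (Phi1 h) := by
  rw [Phi1, Phi1, hdist_subtypePerm]
  have hs := hdist_split (p := fun y : Option F => y ≠ none) (ct1 g) (ct1 h)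
  have hagr := agr_bound (fun y : Option F => y ≠ none) (ct1 g) (ct1 h) g h
  have hb := base2 hg hh hne (fun y : Option F => y ≠ none)
  beta_reduce at hb
  have d1 := delta1_le_one g
  have d2 := delta1_le_one h
  have hcp := card_p1 (F := F)
  omega

lemma dist_goal2 {g h : Equiv.Perm (Option F)} (hg : g ∈ Mset F) (hh : h ∈ Mset F)
    (hgc : g none = none ∨ g none = some 0) (hhc : h none = none ∨ h none = some 0)
    (hne : g ≠ h) : Fintype.card F - 3 ≤ hdist (Phi1 g) (Phi1 h) := by
  rw [Phi1, Phi1, hdist_subtypePerm]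
  have hs := hdist_split (p := fun y : Option F => y ≠ none) (ct1 g) (ct1 h)
  have hagr := agr_bound (fun y : Option F => y ≠ none) (ct1 g) (ct1 h) g h
  have hcp := card_p1 (F := F)
  by_cases hnn : g none = h none
  · have hb := base1 hg hh hne (fun y : Option F => y ≠ none) none (by simp) hnn
    beta_reduce at hb
    have d1 := delta1_le_one g
    have d2 := delta1_le_one h
    omega
  · have hb := base2 hg hh hne (fun y : Option F => y ≠ none)
    beta_reduce at hb
    rcases hgc with hgc | hgc
    · have d1 := delta1_zero hgc
      have d2 := delta1_le_one h
      omega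
    · have hhc2 : h none = none := by
        rcases hhc with hhc | hhc
        · exact hhc
        · exact absurd (hgc.trans hhc.symm) hnn
      have d1 := delta1_le_one g
      have d2 := delta1_zero hhc2
      omega

lemma dist_goal3 {g h : Equiv.Perm (Option F)} (hg : g ∈ Mset F) (hh : h ∈ Mset F)
    (hgc : g none = none ∨ (g (some 0) = none ∧ g none = some 0))
    (hhc : h none = none ∨ (h (some 0) = none ∧ h none = some 0))
    (hne : g ≠ h) : Fintype.card F - 1 - 3 ≤ hdist (Phi2 g) (Phi2 h) := by
  rw [Phi2, Phi2, hdist_subtypePerm]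
  have hs := hdist_split (p := fun y : Option F => y ≠ none ∧ y ≠ some 0) (ct2 g) (ct2 h)
  have hagr := agr_bound (fun y : Option F => y ≠ none ∧ y ≠ some 0) (ct2 g) (ct2 h) g h
  have hcp := card_p2 (F := F)
  by_cases hnn : g none = h none
  · have hb := base1 hg hh hne (fun y : Option F => y ≠ none ∧ y ≠ some 0)
      none (by simp) hnn
    beta_reduce at hb
    have d1 := delta2_le_one g (by tauto)
    have d2 := delta2_le_one h (by tauto)
    omega
  · have hb := base2 hg hh hne (fun y : Option F => y ≠ none ∧ y ≠ some 0)
    beta_reduce at hb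
    rcases hgc with hgc | hgc
    · have hhc2 : h (some 0) = none ∧ h none = some 0 := by
        rcases hhc with hhc | hhc
        · exact absurd (hgc.trans hhc.symm) hnn
        · exact hhc
      have d1 := delta2_le_one g (Or.inl hgc)
      have d2 := delta2_zero hhc2.1 hhc2.2
      omega
    · have hhc2 : h none = none := by
        rcases hhc with hhc | hhc
        · exact hhc
        · exact absurd (hgc.2.trans hhc.2.symm) hnn
      have d1 := delta2_zero hgc.1 hgc.2
      have d2 := delta2_le_one h (Or.inl hhc2)
      omega

lemma dist_goal4 {a b : F} (ha : a ≠ 0) (hb : b ≠ 0)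
    {g h : Equiv.Perm (Option F)} (hg : g ∈ Mset F) (hh : h ∈ Mset F)
    (hgc : g none = none ∨ g none = some 0 ∨
      (g (some 0) = none ∧ (g none = some a ∨ g none = some b)))
    (hhc : h none = none ∨ h none = some 0 ∨
      (h (some 0) = none ∧ (h none = some a ∨ h none = some b)))
    (hne : g ≠ h) : Fintype.card F - 1 - 5 ≤ hdist (Phi2 g) (Phi2 h) := by
  rw [Phi2, Phi2, hdist_subtypePerm]
  have hs := hdist_split (p := fun y : Option F => y ≠ none ∧ y ≠ some 0) (ct2 g) (ct2 h)
  have hagr := agr_bound (fun y : Option F => y ≠ none ∧ y ≠ some 0) (ct2 g) (ct2 h) g h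
  have hcp := card_p2 (F := F)
  by_cases hnn : g none = h none
  · have hbb := base1 hg hh hne (fun y : Option F => y ≠ none ∧ y ≠ some 0)
      none (by simp) hnn
    beta_reduce at hbb
    have d1 := delta2_le_two g
    have d2 := delta2_le_two h
    omega
  · by_cases h00 : g (some 0) = h (some 0)
    · have hbb := base1 hg hh hne (fun y : Option F => y ≠ none ∧ y ≠ some 0)
        (some 0) (by simp) h00
      beta_reduce at hbb
      have d1 := delta2_le_two g
      have d2 := delta2_le_two h
      omega
    · have hbb := base2 hg hh hne (fun y : Option F => y ≠ none ∧ y ≠ some 0)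
      beta_reduce at hbb
      by_cases hg0 : g none = some 0
      · have hhc2 : h none = none ∨ h (some 0) = none := by
          rcases hhc with hhc | hhc | hhc
          · exact Or.inl hhc
          · exact absurd (hg0.trans hhc.symm) hnn
          · exact Or.inr hhc.1
        have d1 := delta2_le_two g
        have d2 := delta2_le_one h hhc2
        omega
      · have hgc2 : g none = none ∨ g (some 0) = none := by
          rcases hgc with hgc | hgc | hgc
          · exact Or.inl hgc
          · exact absurd hgc hg0
          · exact Or.inr hgc.1
        have d1 := delta2_le_one g hgc2
        have d2 := delta2_le_two h
        omega

end Mob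

section Fin
variable {F : Type} [Field F] [Fintype F] [DecidableEq F]

lemma permDist_permCongr {β : Type} [Fintype β] [DecidableEq β] {n : ℕ} (e : β ≃ Fin n)
    (g h : Equiv.Perm β) :
    permDist (e.permCongr g) (e.permCongr h) = hdist g h := by
  classical
  apply Finset.card_bij (fun i _ => e.symm i)
  · intro i hi
    rw [mem_filter] at hi ⊢
    refine ⟨mem_univ _, fun hc => ?_⟩
    apply hi.2
    simp only [Equiv.permCongr_apply, hc]
  · intro i _ j _ hij
    exact e.symm.injective hij
  · intro x hx
    rw [mem_filter] at hx
    refine ⟨e x, ?_, by simp⟩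
    rw [mem_filter]
    refine ⟨mem_univ _, fun hc => hx.2 ?_⟩
    simpa using hc

lemma hdist_self {β : Type*} [Fintype β] [DecidableEq β] (g : Equiv.Perm β) :
    hdist g g = 0 := by
  simp [hdist]

lemma le_Pmax {β : Type} [Fintype β] [DecidableEq β] {n d : ℕ} (e : β ≃ Fin n)
    (C : Finset (Equiv.Perm β)) (hC : ∀ g ∈ C, ∀ h ∈ C, g ≠ h → d ≤ hdist g h) :
    C.card ≤ Pmax n d := by
  classical
  set C' := C.image (fun g => e.permCongr g) with hC'
  have hcard : C'.card = C.card :=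
    card_image_of_injective _ (Equiv.injective (Equiv.permCongr e))
  have hPA : IsPA n d C' := by
    intro x hx y hy hxy
    rw [hC', mem_image] at hx hy
    obtain ⟨g, hg, rfl⟩ := hx
    obtain ⟨h, hh, rfl⟩ := hy
    have hgh : g ≠ h := fun hc => hxy (by rw [hc])
    rw [permDist_permCongr]
    exact hC g hg h hh hgh
  apply le_csSup
  · refine ⟨Fintype.card (Equiv.Perm (Fin n)), ?_⟩
    rintro m ⟨D, -, rfl⟩
    rw [← Finset.card_univ]
    exact Finset.card_le_univ D
  · exact ⟨C', hPA, hcard⟩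

lemma main_all (h7 : 7 ≤ Fintype.card F) :
    (Fintype.card F + 1) * Fintype.card F * (Fintype.card F - 1)
        ≤ Pmax (Fintype.card F) (Fintype.card F - 4) ∧
    2 * Fintype.card F * (Fintype.card F - 1)
        ≤ Pmax (Fintype.card F) (Fintype.card F - 3) ∧
    (Fintype.card F + 1) * (Fintype.card F - 1)
        ≤ Pmax (Fintype.card F - 1) (Fintype.card F - 4) ∧
    2 * (Fintype.card F + 1) * (Fintype.card F - 1)
        ≤ Pmax (Fintype.card F - 1) (Fintype.card F - 6) := by
  classical
  set N := Fintype.card F with hNdef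
  obtain ⟨k, hk⟩ : ∃ k, N = k + 1 := ⟨N - 1, by omega⟩
  have e1 : {y : Option F // y ≠ none} ≃ Fin N :=
    Fintype.equivFinOfCardEq (by rw [Fintype.card_subtype]; exact card_p1)
  have e2 : {y : Option F // y ≠ none ∧ y ≠ some 0} ≃ Fin (N - 1) :=
    Fintype.equivFinOfCardEq (by rw [Fintype.card_subtype]; exact card_p2)
  -- pairs of distinct nonzero field elements
  obtain ⟨a, haa, b, hbb, hab⟩ :
      ∃ x ∈ (univ : Finset F).erase 0, ∃ y ∈ (univ : Finset F).erase 0, x ≠ y := by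
    apply Finset.one_lt_card.1
    rw [card_erase_of_mem (mem_univ _), card_univ]
    omega
  have ha : a ≠ 0 := (mem_erase.1 haa).1
  have hb : b ≠ 0 := (mem_erase.1 hbb).1
  refine ⟨?_, ?_, ?_, ?_⟩
  -- Goal 1
  · set C := (Mset F).image (Phi1 (F := F)) with hC
    have hpair : ∀ x ∈ C, ∀ y ∈ C, x ≠ y → N - 4 ≤ hdist x y := by
      intro x hx y hy hxy
      rw [hC, mem_image] at hx hy
      obtain ⟨g, hg, rfl⟩ := hx
      obtain ⟨h, hh, rfl⟩ := hy
      exact dist_goal1 hg hh (fun hc => hxy (by rw [hc]))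
    have hcard : C.card = (N + 1) * N * (N - 1) := by
      rw [hC, Finset.card_image_of_injOn, card_Mset]
      · simp only [← hNdef]; rw [hk]; simp; ring
      · intro g hg h hh heq
        by_contra hne
        have := dist_goal1 (F := F) hg hh hne
        rw [heq, hdist_self] at this
        omega
    rw [← hcard]
    exact le_Pmax e1 C hpair
  -- Goal 2
  · set C := ((Mset F).filter fun g => g none = none ∨ g none = some 0).image
      (Phi1 (F := F)) with hC
    have hpair : ∀ x ∈ C, ∀ y ∈ C, x ≠ y → N - 3 ≤ hdist x y := by
      intro x hx y hy hxy
      rw [hC, mem_image] at hx hy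
      obtain ⟨g, hg, rfl⟩ := hx
      obtain ⟨h, hh, rfl⟩ := hy
      rw [mem_filter] at hg hh
      exact dist_goal2 hg.1 hh.1 hg.2 hh.2 (fun hc => hxy (by rw [hc]))
    have hcard : C.card = 2 * N * (N - 1) := by
      rw [hC, Finset.card_image_of_injOn]
      · rw [filter_or, card_union_of_disjoint, card_Mset_none, card_Mset_none]
        · simp only [← hNdef]; rw [hk]; simp; ring
        · rw [Finset.disjoint_left]
          intro g hg1 hg2
          rw [mem_filter] at hg1 hg2
          exact Option.some_ne_none 0 (hg2.2.symm.trans hg1.2)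
      · intro g hg h hh heq
        rw [coe_filter] at hg hh
        by_contra hne
        have := dist_goal2 (F := F) hg.1 hh.1 hg.2 hh.2 hne
        rw [heq, hdist_self] at this
        omega
    rw [← hcard]
    exact le_Pmax e1 C hpair
  -- Goal 3
  · set C := ((Mset F).filter fun g => g none = none ∨
      (g (some 0) = none ∧ g none = some 0)).image (Phi2 (F := F)) with hC
    have hpair : ∀ x ∈ C, ∀ y ∈ C, x ≠ y → N - 4 ≤ hdist x y := by
      intro x hx y hy hxy
      rw [hC, mem_image] at hx hy
      obtain ⟨g, hg, rfl⟩ := hx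
      obtain ⟨h, hh, rfl⟩ := hy
      rw [mem_filter] at hg hh
      have := dist_goal3 hg.1 hh.1 hg.2 hh.2 (fun hc => hxy (by rw [hc]))
      omega
    have hcard : C.card = (N + 1) * (N - 1) := by
      rw [hC, Finset.card_image_of_injOn]
      · rw [filter_or, card_union_of_disjoint, card_Mset_none]
        · have := card_Mset_Y (F := F) (some 0) (by simp)
          have hrw : ((Mset F).filter fun g =>
              g (some 0) = none ∧ g none = some 0).card = N - 1 := this
          rw [hrw]
          simp only [← hNdef]
          rw [hk]
          simp
          ring
        · rw [Finset.disjoint_left]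
          intro g hg1 hg2
          rw [mem_filter] at hg1 hg2
          exact Option.some_ne_none 0 (hg2.2.2.symm.trans hg1.2)
      · intro g hg h hh heq
        rw [coe_filter] at hg hh
        by_contra hne
        have := dist_goal3 (F := F) hg.1 hh.1 hg.2 hh.2 hne
        rw [heq, hdist_self] at this
        omega
    rw [← hcard]
    have hpair' : ∀ x ∈ C, ∀ y ∈ C, x ≠ y → N - 1 - 3 ≤ hdist x y := by
      intro x hx y hy hxy
      have := hpair x hx y hy hxy
      omega
    have := le_Pmax e2 C hpair'
    have heq4 : N - 1 - 3 = N - 4 := by omega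
    rw [heq4] at this
    exact this
  -- Goal 4
  · set C := ((Mset F).filter fun g => g none = none ∨ g none = some 0 ∨
      ((g (some 0) = none ∧ g none = some a) ∨
        (g (some 0) = none ∧ g none = some b))).image (Phi2 (F := F)) with hC
    have hpair : ∀ x ∈ C, ∀ y ∈ C, x ≠ y → N - 6 ≤ hdist x y := by
      intro x hx y hy hxy
      rw [hC, mem_image] at hx hy
      obtain ⟨g, hg, rfl⟩ := hx
      obtain ⟨h, hh, rfl⟩ := hy
      rw [mem_filter] at hg hh
      have hgc' : g none = none ∨ g none = some 0 ∨
          (g (some 0) = none ∧ (g none = some a ∨ g none = some b)) := by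
        rcases hg.2 with h1 | h1 | ⟨h3, h4⟩ | ⟨h3, h4⟩
        · exact Or.inl h1
        · exact Or.inr (Or.inl h1)
        · exact Or.inr (Or.inr ⟨h3, Or.inl h4⟩)
        · exact Or.inr (Or.inr ⟨h3, Or.inr h4⟩)
      have hhc' : h none = none ∨ h none = some 0 ∨
          (h (some 0) = none ∧ (h none = some a ∨ h none = some b)) := by
        rcases hh.2 with h1 | h1 | ⟨h3, h4⟩ | ⟨h3, h4⟩
        · exact Or.inl h1
        · exact Or.inr (Or.inl h1)
        · exact Or.inr (Or.inr ⟨h3, Or.inl h4⟩)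
        · exact Or.inr (Or.inr ⟨h3, Or.inr h4⟩)
      have := dist_goal4 ha hb hg.1 hh.1 hgc' hhc'
        (fun hc => hxy (by rw [hc]))
      omega
    have hcard : C.card = 2 * (N + 1) * (N - 1) := by
      rw [hC, Finset.card_image_of_injOn]
      · rw [filter_or, filter_or, filter_or, card_union_of_disjoint,
          card_union_of_disjoint, card_union_of_disjoint,
          card_Mset_none, card_Mset_none,
          card_Mset_Y (some a) (by simp), card_Mset_Y (some b) (by simp)]
        · simp only [← hNdef]; rw [hk]; simp; ring
        · rw [Finset.disjoint_left]
          intro g hg1 hg2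
          rw [mem_filter] at hg1 hg2
          have h1 := hg1.2.2
          have h2 := hg2.2.2
          rw [h1] at h2
          exact hab (Option.some.inj h2)
        · rw [Finset.disjoint_left]
          intro g hg1 hg2
          rw [mem_filter] at hg1
          rcases mem_union.1 hg2 with h2 | h2 <;> rw [mem_filter] at h2
          · exact ha (Option.some.inj (hg1.2.symm.trans h2.2.2)).symm
          · exact hb (Option.some.inj (hg1.2.symm.trans h2.2.2)).symm
        · rw [Finset.disjoint_left]
          intro g hg1 hg2
          rw [mem_filter] at hg1
          rcases mem_union.1 hg2 with h2 | h2
          · rw [mem_filter] at h2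
            exact Option.some_ne_none 0 (h2.2.symm.trans hg1.2)
          · rcases mem_union.1 h2 with h3 | h3 <;> rw [mem_filter] at h3
            · exact Option.some_ne_none a (h3.2.2.symm.trans hg1.2)
            · exact Option.some_ne_none b (h3.2.2.symm.trans hg1.2)
      · intro g hg h hh heq
        simp only [coe_filter, Set.mem_setOf_eq] at hg hh
        by_contra hne
        have hgc' : g none = none ∨ g none = some 0 ∨
            (g (some 0) = none ∧ (g none = some a ∨ g none = some b)) := by
          rcases hg.2 with h1 | h1 | ⟨h3, h4⟩ | ⟨h3, h4⟩
          · exact Or.inl h1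
          · exact Or.inr (Or.inl h1)
          · exact Or.inr (Or.inr ⟨h3, Or.inl h4⟩)
          · exact Or.inr (Or.inr ⟨h3, Or.inr h4⟩)
        have hhc' : h none = none ∨ h none = some 0 ∨
            (h (some 0) = none ∧ (h none = some a ∨ h none = some b)) := by
          rcases hh.2 with h1 | h1 | ⟨h3, h4⟩ | ⟨h3, h4⟩
          · exact Or.inl h1
          · exact Or.inr (Or.inl h1)
          · exact Or.inr (Or.inr ⟨h3, Or.inl h4⟩)
          · exact Or.inr (Or.inr ⟨h3, Or.inr h4⟩)
        have := dist_goal4 (F := F) ha hb hg.1 hh.1 hgc' hhc' hne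
        rw [heq, hdist_self] at this
        omega
    rw [← hcard]
    have hpair' : ∀ x ∈ C, ∀ y ∈ C, x ≠ y → N - 1 - 5 ≤ hdist x y := by
      intro x hx y hy hxy
      have := hpair x hx y hy hxy
      omega
    have := le_Pmax e2 C hpair'
    have heq6 : N - 1 - 5 = N - 6 := by omega
    rw [heq6] at this
    exact this

end Fin

theorem stmt19 (q : ℕ) (hq : IsPrimePow q) (h7 : 7 ≤ q) :
    Pmax q (q - 4) ≥ (q + 1) * q * (q - 1) ∧
    Pmax q (q - 3) ≥ 2 * q * (q - 1) ∧
    Pmax (q - 1) (q - 4) ≥ (q + 1) * (q - 1) ∧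
    Pmax (q - 1) (q - 6) ≥ 2 * (q + 1) * (q - 1) := by
  obtain ⟨p, k, hp, hk, rfl⟩ := hq
  haveI : Fact p.Prime := ⟨hp.nat_prime⟩
  set F := GaloisField p k with hF
  haveI : Fintype F := Fintype.ofFinite F
  haveI : DecidableEq F := Classical.decEq F
  have hcard : Fintype.card F = p ^ k := by
    rw [← Nat.card_eq_fintype_card]
    exact GaloisField.card p k hk.ne'
  have h7' : 7 ≤ Fintype.card F := by rw [hcard]; exact h7
  have main := main_all (F := F) h7'
  rw [hcard] at main
  exact main
end
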